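/- Let V be the qutrit tensor with ⟨jk|V|l⟩ = 1/√2 when j,k,l ∈ {0,1,2} are pairwise distinct and 0 otherwise. Then V is planar perfect: all three bipartite reshapings of V (viewing any one leg as input and the other two as output, in cyclic order) are proportional to isometries. -/

import Mathlib

open Matrix

noncomputable def perfectV : Matrix (Fin 3 × Fin 3) (Fin 3) ℂ :=
  fun jk l =>
    if jk.1 = jk.2 ∨ jk.2 = l ∨ l = jk.1 then 0
    else (1 : ℂ) / Real.sqrt 2

noncomputable def perfectV₂ : Matrix (Fin 3 × Fin 3) (Fin 3) ℂ :=
  fun kl j => perfectV (j, kl.1) kl.2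

noncomputable def perfectV₃ : Matrix (Fin 3 × Fin 3) (Fin 3) ℂ :=
  fun lj k => perfectV (lj.2, k) lj.1

lemma hinv : (((Real.sqrt 2 : ℝ) : ℂ))⁻¹ * ((Real.sqrt 2 : ℝ) : ℂ)⁻¹ = 1/2 := by
  rw [← mul_inv]
  norm_cast
  rw [Real.mul_self_sqrt (by norm_num)]
  norm_num

/-- `V` is planar perfect: all three cyclic reshapings of `V` are proportional
to isometries `ℂ³ → ℂ³ ⊗ ℂ³`. -/
theorem perfectV_planar_perfect :
    (∃ c : ℂ, c ≠ 0 ∧ perfectVᴴ * perfectV = c • (1 : Matrix (Fin 3) (Fin 3) ℂ)) ∧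
    (∃ c : ℂ, c ≠ 0 ∧ perfectV₂ᴴ * perfectV₂ = c • (1 : Matrix (Fin 3) (Fin 3) ℂ)) ∧
    (∃ c : ℂ, c ≠ 0 ∧ perfectV₃ᴴ * perfectV₃ = c • (1 : Matrix (Fin 3) (Fin 3) ℂ)) := by
  refine ⟨⟨1, one_ne_zero, ?_⟩, ⟨1, one_ne_zero, ?_⟩, ⟨1, one_ne_zero, ?_⟩⟩ <;>
  · ext i j
    fin_cases i <;> fin_cases j <;>
      simp [Matrix.mul_apply, Fintype.sum_prod_type, Fin.sum_univ_succ, perfectV,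
        perfectV₂, perfectV₃, conjTranspose_apply, hinv] <;>
      norm_num [hinv]
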